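/- Let p be a polynomial in the Smith–Kidger Type 1 space P₂ ⊕ span{x₁x₂x₃, x₁²x₂, x₂²x₃, x₃²x₁}. If p vanishes at the four points (1,±1,±1) and at (1,0,0), then the integral of p(1,x₂,x₃) over the square [−1,1]² (in x₂ and x₃) equals zero. -/

import Mathlib

open MvPolynomial

noncomputable def SK1 : Submodule ℝ (MvPolynomial (Fin 3) ℝ) :=
  MvPolynomial.restrictTotalDegree (Fin 3) ℝ 2 ⊔
    Submodule.span ℝ {X 0 * X 1 * X 2, X 0 ^ 2 * X 1, X 1 ^ 2 * X 2, X 2 ^ 2 * X 0}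

section aux

lemma contEmbed : Continuous fun yz : ℝ × ℝ => (![1, yz.1, yz.2] : Fin 3 → ℝ) := by
  refine continuous_pi ?_
  intro i
  fin_cases i
  · simpa using (continuous_const : Continuous fun _ : ℝ × ℝ => (1 : ℝ))
  · simpa using (continuous_fst : Continuous fun yz : ℝ × ℝ => yz.1)
  · simpa using (continuous_snd : Continuous fun yz : ℝ × ℝ => yz.2)

lemma contP (p : MvPolynomial (Fin 3) ℝ) :
    Continuous fun yz : ℝ × ℝ => eval ![1, yz.1, yz.2] p :=
  (MvPolynomial.continuous_eval p).comp contEmbed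

lemma contZ (p : MvPolynomial (Fin 3) ℝ) (y : ℝ) :
    Continuous fun z : ℝ => eval ![1, y, z] p := by
  have h : Continuous fun z : ℝ => (![1, y, z] : Fin 3 → ℝ) := by
    refine continuous_pi ?_
    intro i
    fin_cases i
    · simpa using (continuous_const : Continuous fun _ : ℝ => (1 : ℝ))
    · simpa using (continuous_const : Continuous fun _ : ℝ => y)
    · simpa using (continuous_id' : Continuous fun z : ℝ => z)
  exact (MvPolynomial.continuous_eval p).comp h

lemma contInner (p : MvPolynomial (Fin 3) ℝ) :
    Continuous fun y : ℝ => ∫ z in (-1:ℝ)..1, eval ![1, y, z] p :=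
  intervalIntegral.continuous_parametric_intervalIntegral_of_continuous'
    (f := fun y z => eval ![1, y, z] p) (contP p) (-1) 1

noncomputable def Good : Submodule ℝ (MvPolynomial (Fin 3) ℝ) where
  carrier := {p | (∫ y in (-1:ℝ)..1, ∫ z in (-1:ℝ)..1, eval ![1, y, z] p) =
      (1/3) * (eval ![1, 1, 1] p + eval ![1, 1, -1] p + eval ![1, -1, 1] p +
        eval ![1, -1, -1] p) + (8/3) * eval ![1, 0, 0] p}
  zero_mem' := by simp
  add_mem' := by
    intro p q hp hq
    simp only [Set.mem_setOf_eq] at hp hq ⊢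
    have hin : ∀ y : ℝ, (∫ z in (-1:ℝ)..1, eval ![1, y, z] (p + q)) =
        (∫ z in (-1:ℝ)..1, eval ![1, y, z] p) + ∫ z in (-1:ℝ)..1, eval ![1, y, z] q := by
      intro y
      simp only [map_add]
      exact intervalIntegral.integral_add ((contZ p y).intervalIntegrable _ _)
        ((contZ q y).intervalIntegrable _ _)
    rw [show (∫ y in (-1:ℝ)..1, ∫ z in (-1:ℝ)..1, eval ![1, y, z] (p + q)) =
        ∫ y in (-1:ℝ)..1, ((∫ z in (-1:ℝ)..1, eval ![1, y, z] p) +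
          ∫ z in (-1:ℝ)..1, eval ![1, y, z] q) from
      intervalIntegral.integral_congr fun y _ => hin y]
    rw [intervalIntegral.integral_add ((contInner p).intervalIntegrable _ _)
      ((contInner q).intervalIntegrable _ _), hp, hq]
    simp only [map_add]
    ring
  smul_mem' := by
    intro c p hp
    simp only [Set.mem_setOf_eq] at hp ⊢
    simp only [MvPolynomial.smul_eval]
    rw [show (∫ y in (-1:ℝ)..1, ∫ z in (-1:ℝ)..1, c * eval ![1, y, z] p) =
        ∫ y in (-1:ℝ)..1, c * ∫ z in (-1:ℝ)..1, eval ![1, y, z] p from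
      intervalIntegral.integral_congr fun y _ => intervalIntegral.integral_const_mul c _]
    rw [intervalIntegral.integral_const_mul, hp]
    ring

lemma mem_Good {p : MvPolynomial (Fin 3) ℝ} :
    p ∈ Good ↔ (∫ y in (-1:ℝ)..1, ∫ z in (-1:ℝ)..1, eval ![1, y, z] p) =
      (1/3) * (eval ![1, 1, 1] p + eval ![1, 1, -1] p + eval ![1, -1, 1] p +
        eval ![1, -1, -1] p) + (8/3) * eval ![1, 0, 0] p := Iff.rfl

lemma inner_zero (c : ℝ) : ∫ z in (-1:ℝ)..1, c * z = 0 := by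
  rw [intervalIntegral.integral_const_mul, integral_id]
  norm_num

lemma prod_int (a b : ℕ) :
    (∫ y in (-1:ℝ)..1, ∫ z in (-1:ℝ)..1, y ^ a * z ^ b) =
      (∫ y in (-1:ℝ)..1, y ^ a) * ∫ z in (-1:ℝ)..1, z ^ b := by
  simp_rw [intervalIntegral.integral_const_mul]
  rw [intervalIntegral.integral_mul_const]

lemma key (a b : ℕ) (hab : a + b ≤ 3) :
    (∫ y in (-1:ℝ)..1, ∫ z in (-1:ℝ)..1, y ^ a * z ^ b) =
      (1/3) * ((1:ℝ) ^ a * 1 ^ b + 1 ^ a * (-1:ℝ) ^ b + (-1:ℝ) ^ a * 1 ^ b +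
        (-1:ℝ) ^ a * (-1:ℝ) ^ b) + (8/3) * ((0:ℝ) ^ a * (0:ℝ) ^ b) := by
  rw [prod_int, integral_pow, integral_pow]
  have ha : a ≤ 3 := by omega
  interval_cases a <;> (have hb : b ≤ 3 := by omega) <;> interval_cases b <;>
    first | omega | norm_num

lemma eval_mono (v : Fin 3 →₀ ℕ) (y z : ℝ) :
    eval ![1, y, z] (monomial v (1:ℝ)) = 1 ^ (v 0) * (y ^ (v 1) * z ^ (v 2)) := by
  rw [eval_monomial, Finsupp.prod_fintype _ _ (fun i => pow_zero _)]
  simp [Fin.prod_univ_three, mul_assoc]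

lemma monomial_mem (v : Fin 3 →₀ ℕ) (h : v 1 + v 2 ≤ 3) : monomial v (1:ℝ) ∈ Good := by
  have hk := key (v 1) (v 2) h
  simp only [one_pow, one_mul, mul_one] at hk
  rw [mem_Good]
  simp only [eval_mono, one_pow, one_mul, mul_one]
  exact hk

lemma SK1_le_Good : SK1 ≤ Good := by
  rw [SK1]
  apply sup_le
  · intro p hp
    rw [MvPolynomial.mem_restrictTotalDegree] at hp
    rw [p.as_sum]
    refine Submodule.sum_mem _ fun v hv => ?_
    have hd : v 1 + v 2 ≤ 3 := by
      have := MvPolynomial.le_totalDegree hv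
      have hsum : v.sum (fun _ n => n) = v 0 + v 1 + v 2 := by
        rw [Finsupp.sum_fintype _ _ (fun i => rfl), Fin.sum_univ_three]
      omega
    have : monomial v (coeff v p) = (coeff v p) • monomial v (1:ℝ) := by
      rw [MvPolynomial.smul_monomial, smul_eq_mul, mul_one]
    rw [this]
    exact Submodule.smul_mem _ _ (monomial_mem v hd)
  · rw [Submodule.span_le]
    intro x hx
    simp only [Set.mem_insert_iff, Set.mem_singleton_iff] at hx
    rcases hx with rfl | rfl | rfl | rfl <;>
      · rw [SetLike.mem_coe, mem_Good]
        simp only [map_mul, map_pow, eval_X, Matrix.cons_val_zero, Matrix.cons_val_one,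
          Matrix.head_cons, Matrix.cons_val_two, Matrix.tail_cons]
        norm_num [intervalIntegral.integral_const_mul, intervalIntegral.integral_mul_const,
          integral_pow, intervalIntegral.integral_const, integral_id]
        all_goals simp [inner_zero]

end aux

theorem stmt2 (p : MvPolynomial (Fin 3) ℝ) (hp : p ∈ SK1)
    (h1 : eval ![1, 1, 1] p = 0) (h2 : eval ![1, 1, -1] p = 0)
    (h3 : eval ![1, -1, 1] p = 0) (h4 : eval ![1, -1, -1] p = 0)
    (h5 : eval ![1, 0, 0] p = 0) :
    (∫ y in (-1 : ℝ)..1, ∫ z in (-1 : ℝ)..1, eval ![1, y, z] p) = 0 := by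
  have hg := mem_Good.mp (SK1_le_Good hp)
  rw [hg, h1, h2, h3, h4, h5]
  ring
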